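/- The function q ↦ A_p^{ξ=ξ*_q} given piecewise by (2/q)e^{Lq+K} for qL ≤ 1/2 and [qL(√(1+4/(qL))+1)+2]/(2q·e^{-2/(√(1+4/(qL))+1)-K}) for qL > 1/2 is continuous at q = 1/(2L) and strictly decreasing on (0,1]; hence its minimum over q ∈ (0,1] is attained at q = 1. -/

import Mathlib

open Real Set

lemma aux_fb_anti (L K a b : ℝ) (hL : 0 < L) (ha : 0 < a) (hab : a < b)
    (hb : b * L ≤ 1/2) : 2 / b * Real.exp (L * b + K) < 2 / a * Real.exp (L * a + K) := by
  have hb0 : 0 < b := lt_trans ha hab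
  set d := L*(b-a) with hd
  have hd0 : 0 < d := by apply mul_pos hL; linarith
  have hd2 : d ≤ 1/2 := by nlinarith
  have h1 : 1 - d < Real.exp (-d) := by
    have := Real.add_one_lt_exp (show -d ≠ 0 by intro h; rw [neg_eq_zero] at h; linarith)
    linarith
  have h2 : a < b * Real.exp (-d) := by
    nlinarith [mul_lt_mul_of_pos_left h1 hb0]
  have h4 : a * Real.exp d < b := by
    have := mul_lt_mul_of_pos_right h2 (Real.exp_pos d)
    rwa [mul_assoc, ← Real.exp_add, neg_add_cancel, Real.exp_zero, mul_one] at this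
  have h3 : a * Real.exp (L*b+K) < b * Real.exp (L*a+K) := by
    have he : Real.exp (L*b+K) = Real.exp (L*a+K) * Real.exp d := by
      rw [← Real.exp_add, hd]; ring_nf
    rw [he]
    nlinarith [mul_lt_mul_of_pos_right h4 (Real.exp_pos (L*a+K))]
  rw [div_mul_eq_mul_div, div_mul_eq_mul_div, div_lt_div_iff₀ hb0 ha]
  nlinarith

lemma aux_g_mono (L K u₁ u₂ : ℝ) (hL : 0 < L) (h1 : 2 ≤ u₁) (h12 : u₁ < u₂) :
    L/4*u₁^2*Real.exp (2/u₁+K) < L/4*u₂^2*Real.exp (2/u₂+K) := by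
  have hu1 : 0 < u₁ := by linarith
  have hu2 : 0 < u₂ := by linarith
  set t := 2/u₁ - 2/u₂ with ht
  have ht0 : 0 < t := by
    have : 2/u₂ < 2/u₁ := div_lt_div_of_pos_left (by norm_num) hu1 h12
    simp only [ht]; linarith
  have hpoly : u₁^2 < u₂^2 * (1 - t) := by
    have hrw : 1 - t = (u₁*u₂ - 2*u₂ + 2*u₁)/(u₁*u₂) := by
      rw [ht]; field_simp; ring
    rw [hrw, mul_div_assoc', lt_div_iff₀ (by positivity)]
    nlinarith [mul_pos (mul_pos hu2 (sub_pos.2 h12)) (show (0:ℝ) < (u₁-2)*u₂ + u₁^2 by nlinarith)]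
  have hexp : 1 - t < Real.exp (-t) := by
    have := Real.add_one_lt_exp (show -t ≠ 0 by intro h; rw [neg_eq_zero] at h; linarith)
    linarith
  have key : u₁^2 * Real.exp t < u₂^2 := by
    have h5 : u₁^2 < u₂^2 * Real.exp (-t) := by
      nlinarith [mul_lt_mul_of_pos_left hexp (show (0:ℝ) < u₂^2 by positivity)]
    have := mul_lt_mul_of_pos_right h5 (Real.exp_pos t)
    rwa [mul_assoc, ← Real.exp_add, neg_add_cancel, Real.exp_zero, mul_one] at this
  have hE := Real.exp_pos (2/u₂+K)
  have h6 : u₁^2 * Real.exp (2/u₁+K) < u₂^2 * Real.exp (2/u₂+K) := by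
    have he : Real.exp (2/u₁+K) = Real.exp (2/u₂+K) * Real.exp t := by
      rw [← Real.exp_add, ht]; ring_nf
    rw [he]
    nlinarith [mul_lt_mul_of_pos_right key hE]
  nlinarith [mul_lt_mul_of_pos_left h6 (show (0:ℝ) < L/4 by linarith)]

lemma aux_second_eq (L K q : ℝ) (hL : 0 < L) (hq : 0 < q) :
    (q * L * (Real.sqrt (1 + 4 / (q * L)) + 1) + 2) /
      (2 * q * Real.exp (-2 / (Real.sqrt (1 + 4 / (q * L)) + 1) - K))
    = L/4*(Real.sqrt (1 + 4 / (q * L))+1)^2*Real.exp (2/(Real.sqrt (1 + 4 / (q * L))+1)+K) := by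
  have hqL : 0 < q * L := mul_pos hq hL
  set s := Real.sqrt (1 + 4 / (q * L)) with hs
  have hsarg : (0:ℝ) ≤ 1 + 4 / (q*L) := by positivity
  have hs2 : s^2 = 1 + 4/(q*L) := Real.sq_sqrt hsarg
  have hs0 : 0 < s := Real.sqrt_pos.2 (by positivity)
  have hs1 : 0 < s + 1 := by linarith
  have hkey : q*L*s^2 = q*L + 4 := by
    rw [hs2]; field_simp
  have harg : -2 / (s+1) - K = -(2/(s+1)+K) := by ring
  rw [harg, Real.exp_neg]
  set E := Real.exp (2/(s+1)+K) with hEdef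
  have hE : 0 < E := Real.exp_pos _
  rw [div_eq_iff (by positivity)]
  field_simp
  linear_combination (-2) * hkey

theorem stmt15 (L K : ℝ) (hL : 0 < L) (hK : 0 < K) :
    let F := fun q : ℝ =>
      if q * L ≤ 1 / 2 then 2 / q * Real.exp (L * q + K)
      else (q * L * (Real.sqrt (1 + 4 / (q * L)) + 1) + 2) /
        (2 * q * Real.exp (-2 / (Real.sqrt (1 + 4 / (q * L)) + 1) - K));
    ContinuousAt F (1 / (2 * L)) ∧
    StrictAntiOn F (Ioc (0:ℝ) 1) ∧
    ∀ q ∈ Ioc (0:ℝ) 1, F 1 ≤ F q := by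
  intro F
  have hF1 : ∀ q : ℝ, q * L ≤ 1/2 → F q = 2 / q * Real.exp (L * q + K) := by
    intro q h; simp only [F, if_pos h]
  have hF2 : ∀ q : ℝ, ¬ (q * L ≤ 1/2) → F q = (q * L * (Real.sqrt (1 + 4 / (q * L)) + 1) + 2) /
        (2 * q * Real.exp (-2 / (Real.sqrt (1 + 4 / (q * L)) + 1) - K)) := by
    intro q h; simp only [F, if_neg h]
  set q0 : ℝ := 1/(2*L) with hq0def
  have hq0 : 0 < q0 := by rw [hq0def]; positivity
  have hq0L : q0 * L = 1/2 := by rw [hq0def]; field_simp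
  have hLq0 : L * q0 = 1/2 := by rw [mul_comm]; exact hq0L
  have h2q0 : (2:ℝ)/q0 = 4*L := by rw [hq0def]; field_simp; ring
  have hs0 : Real.sqrt (1 + 4/(q0*L)) = 3 := by
    rw [hq0L, show (1:ℝ) + 4/(1/2) = 3^2 by norm_num]
    exact Real.sqrt_sq (by norm_num)
  -- value match at q0
  have hval0 : (q0 * L * (Real.sqrt (1 + 4 / (q0 * L)) + 1) + 2) /
        (2 * q0 * Real.exp (-2 / (Real.sqrt (1 + 4 / (q0 * L)) + 1) - K))
      = 2 / q0 * Real.exp (L * q0 + K) := by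
    rw [aux_second_eq L K q0 hL hq0, hs0, hLq0, h2q0]
    norm_num
    ring
  -- continuity
  have hsc : ContinuousAt (fun q : ℝ => Real.sqrt (1 + 4/(q*L))) q0 :=
    Real.continuous_sqrt.continuousAt.comp
      (continuousAt_const.add (continuousAt_const.div (continuousAt_id.mul continuousAt_const)
        (mul_pos hq0 hL).ne'))
  have hfbc : ContinuousAt (fun q : ℝ => 2 / q * Real.exp (L * q + K)) q0 :=
    (continuousAt_const.div continuousAt_id hq0.ne').mul
      (Real.continuous_exp.continuousAt.comp
        ((continuousAt_const.mul continuousAt_id).add continuousAt_const))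
  have hne1 : Real.sqrt (1 + 4/(q0*L)) + 1 ≠ 0 := by rw [hs0]; norm_num
  have hGc : ContinuousAt (fun q : ℝ => (q * L * (Real.sqrt (1 + 4 / (q * L)) + 1) + 2) /
        (2 * q * Real.exp (-2 / (Real.sqrt (1 + 4 / (q * L)) + 1) - K))) q0 := by
    apply ContinuousAt.div
    · exact ((continuousAt_id.mul continuousAt_const).mul (hsc.add continuousAt_const)).add
        continuousAt_const
    · exact (continuousAt_const.mul continuousAt_id).mul
        (Real.continuous_exp.continuousAt.comp
          ((continuousAt_const.div (hsc.add continuousAt_const) hne1).sub continuousAt_const))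
    · positivity
  have hcont : ContinuousAt F q0 := by
    rw [continuousAt_iff_continuous_left_right]
    constructor
    · apply hfbc.continuousWithinAt.congr
      · intro x hx
        apply hF1
        calc x * L ≤ q0 * L := mul_le_mul_of_nonneg_right hx hL.le
          _ = 1/2 := hq0L
      · exact hF1 q0 hq0L.le
    · apply hGc.continuousWithinAt.congr
      · intro x hx
        by_cases hxL : x * L ≤ 1/2
        · have hx0 : x = q0 := by
            have h1 : q0 * L ≤ x * L := mul_le_mul_of_nonneg_right hx hL.le
            have h2 : x * L = q0 * L := by rw [hq0L]; exact le_antisymm hxL (hq0L ▸ h1)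
            exact mul_right_cancel₀ hL.ne' h2
          rw [hx0, hF1 q0 hq0L.le]
          exact hval0.symm
        · exact hF2 x hxL
      · rw [hF1 q0 hq0L.le]; exact hval0.symm
  have hanti : StrictAntiOn F (Ioc (0:ℝ) 1) := by
    intro a ha b hb hab
    have ha0 : 0 < a := ha.1
    have hb0 : 0 < b := hb.1
    by_cases hbL : b * L ≤ 1/2
    · have haL : a * L ≤ 1/2 := le_trans (mul_lt_mul_of_pos_right hab hL).le hbL
      rw [hF1 a haL, hF1 b hbL]
      exact aux_fb_anti L K a b hL ha0 hab hbL
    · push_neg at hbL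
      have hsb1 : 1 < Real.sqrt (1 + 4/(b*L)) := by
        have h4 : 0 < 4/(b*L) := by positivity
        exact (Real.lt_sqrt (by norm_num : (0:ℝ) ≤ 1)).2 (by nlinarith : (1:ℝ)^2 < 1 + 4/(b*L))
      have hsb3 : Real.sqrt (1 + 4/(b*L)) < 3 := by
        rw [show (3:ℝ) = Real.sqrt (3^2) from (Real.sqrt_sq (by norm_num)).symm]
        apply Real.sqrt_lt_sqrt (by positivity)
        have : 4/(b*L) < 8 := by rw [div_lt_iff₀ (mul_pos hb0 hL)]; linarith
        nlinarith
      rw [hF2 b (not_le.2 hbL), aux_second_eq L K b hL hb0]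
      by_cases haL : a * L ≤ 1/2
      · rw [hF1 a haL]
        have hstep : L/4*(Real.sqrt (1 + 4/(b*L))+1)^2 *
              Real.exp (2/(Real.sqrt (1 + 4/(b*L))+1)+K) < 2 / q0 * Real.exp (L * q0 + K) := by
          have h16 : 2 / q0 * Real.exp (L * q0 + K) = L/4*(4:ℝ)^2*Real.exp (2/(4:ℝ)+K) := by
            rw [hLq0, h2q0]
            norm_num
            ring
          rw [h16]
          exact aux_g_mono L K _ _ hL (by linarith) (by linarith)
        have ha_le : a ≤ q0 := by
          rw [hq0def, le_div_iff₀ (by positivity : (0:ℝ) < 2*L)]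
          nlinarith
        rcases lt_or_eq_of_le ha_le with h | h
        · exact lt_trans hstep (aux_fb_anti L K a q0 hL ha0 h hq0L.le)
        · rw [h]; exact hstep
      · push_neg at haL
        rw [hF2 a (not_le.2 haL), aux_second_eq L K a hL ha0]
        have hsa : Real.sqrt (1 + 4/(b*L)) < Real.sqrt (1 + 4/(a*L)) := by
          apply Real.sqrt_lt_sqrt (by positivity)
          have : 4/(b*L) < 4/(a*L) := div_lt_div_of_pos_left (by norm_num) (mul_pos ha0 hL)
            (mul_lt_mul_of_pos_right hab hL)
          linarith
        exact aux_g_mono L K _ _ hL (by linarith) (by linarith)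
  refine ⟨hcont, hanti, ?_⟩
  intro q hq
  rcases eq_or_lt_of_le hq.2 with h | h
  · rw [h]
  · exact (hanti hq (by constructor <;> norm_num) h).le
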